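/- For every r₀ > 0 and n ∈ ℕ there exists a constant C > 0 such that for every λ ≥ max(2, 2/r₀) and every continuously differentiable map w : ℝ² → ℝⁿ, the average of w over the boundary circle of 𝔻_{r₀} satisfies |(1/2π)∫₀^{2π} w(r₀ cos θ, r₀ sin θ) dθ| ≤ C (log λ)^{1/2} ( ∫_{𝔻_{r₀}} |Dw(x)|² + ρ_λ(x)² |w(x)|² dx )^{1/2}. -/

import Mathlib

open MeasureTheory Real

noncomputable section

abbrev E2 := EuclideanSpace ℝ (Fin 2)

/-- The weight `ρ_λ(x) = λ/(1+λ²|x|²)`. -/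
def rho (l : ℝ) (x : E2) : ℝ := l / (1 + l ^ 2 * ‖x‖ ^ 2)

/-- Square of the Hilbert–Schmidt (Frobenius) norm of the total derivative:
`|Dw(x)|² = Σᵢ |∂ᵢ w(x)|²`. -/
def hsNormSq {n : ℕ} (w : E2 → EuclideanSpace ℝ (Fin n)) (x : E2) : ℝ :=
  ∑ i : Fin 2, ‖fderiv ℝ w x (EuclideanSpace.single i 1)‖ ^ 2

/-- The circle average `(2π)⁻¹ ∫₀^{2π} w(ρ cos θ, ρ sin θ) dθ`. -/
def circAvg {n : ℕ} (w : E2 → EuclideanSpace ℝ (Fin n)) (ρ : ℝ) : EuclideanSpace ℝ (Fin n) :=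
  (2 * π)⁻¹ • ∫ θ in (0 : ℝ)..(2 * π),
    w ((WithLp.equiv 2 (Fin 2 → ℝ)).symm ![ρ * Real.cos θ, ρ * Real.sin θ])

open Set

namespace Stmt10Aux

def uvec (θ : ℝ) : E2 := (WithLp.equiv 2 (Fin 2 → ℝ)).symm ![Real.cos θ, Real.sin θ]

lemma smul_uvec (r θ : ℝ) :
    r • uvec θ = (WithLp.equiv 2 (Fin 2 → ℝ)).symm ![r * Real.cos θ, r * Real.sin θ] := by
  unfold uvec
  rw [WithLp.equiv_symm_apply, ← WithLp.toLp_smul]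
  congr 1
  funext i
  fin_cases i <;> simp

lemma norm_uvec (θ : ℝ) : ‖uvec θ‖ = 1 := by
  rw [uvec, EuclideanSpace.norm_eq]
  have : ∑ i : Fin 2, ‖(WithLp.equiv 2 (Fin 2 → ℝ)).symm ![cos θ, sin θ] i‖ ^ 2 = 1 := by
    simp [Fin.sum_univ_two, Real.norm_eq_abs, sq_abs, cos_sq_add_sin_sq]
  rw [this, Real.sqrt_one]

lemma norm_smul_uvec (r θ : ℝ) : ‖r • uvec θ‖ = |r| := by
  rw [norm_smul, norm_uvec]; simp

lemma continuous_uvec : Continuous uvec := by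
  apply Continuous.comp (PiLp.continuous_toLp 2 (fun _ : Fin 2 => ℝ))
  apply continuous_pi
  intro i
  fin_cases i <;> simp [Real.continuous_cos, Real.continuous_sin]

lemma continuous_Phi : Continuous (fun p : ℝ × ℝ => p.1 • uvec p.2) :=
  continuous_fst.smul (continuous_uvec.comp continuous_snd)

lemma uvec_periodic : Function.Periodic uvec (2 * π) := by
  intro θ; unfold uvec; simp [Real.cos_add_two_pi, Real.sin_add_two_pi]


lemma uvec_decomp (θ : ℝ) :
    uvec θ = Real.cos θ • EuclideanSpace.single (0 : Fin 2) (1:ℝ)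
      + Real.sin θ • EuclideanSpace.single (1 : Fin 2) (1:ℝ) := by
  ext i
  fin_cases i <;> simp [uvec, EuclideanSpace.single_apply]

lemma hs_bound {V : Type*} [NormedAddCommGroup V] [NormedSpace ℝ V]
    (T : E2 →L[ℝ] V) (θ : ℝ) :
    ‖T (uvec θ)‖ ^ 2 ≤ ∑ i : Fin 2, ‖T (EuclideanSpace.single i (1:ℝ))‖ ^ 2 := by
  set a := ‖T (EuclideanSpace.single (0 : Fin 2) (1:ℝ))‖
  set b := ‖T (EuclideanSpace.single (1 : Fin 2) (1:ℝ))‖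
  have h1 : ‖T (uvec θ)‖ ≤ |Real.cos θ| * a + |Real.sin θ| * b := by
    rw [uvec_decomp, map_add, T.map_smul, T.map_smul]
    refine (norm_add_le _ _).trans ?_
    rw [norm_smul, norm_smul, Real.norm_eq_abs, Real.norm_eq_abs]
  have h2 : (|Real.cos θ| * a + |Real.sin θ| * b) ^ 2 ≤ a ^ 2 + b ^ 2 := by
    have hc : |Real.cos θ| ^ 2 + |Real.sin θ| ^ 2 = 1 := by
      rw [sq_abs, sq_abs, cos_sq_add_sin_sq]
    nlinarith [sq_nonneg (|Real.cos θ| * b - |Real.sin θ| * a), abs_nonneg (Real.cos θ),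
      abs_nonneg (Real.sin θ), norm_nonneg (T (EuclideanSpace.single (0 : Fin 2) (1:ℝ))),
      norm_nonneg (T (EuclideanSpace.single (1 : Fin 2) (1:ℝ)))]
  rw [Fin.sum_univ_two]
  refine le_trans ?_ h2
  have h0 : (0:ℝ) ≤ |Real.cos θ| * a + |Real.sin θ| * b := by positivity
  exact pow_le_pow_left₀ (norm_nonneg _) h1 2

lemma hasDerivAt_radial {n : ℕ} {w : E2 → EuclideanSpace ℝ (Fin n)}
    (hw : ContDiff ℝ 1 w) (θ r : ℝ) :
    HasDerivAt (fun s : ℝ => w (s • uvec θ)) (fderiv ℝ w (r • uvec θ) (uvec θ)) r := by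
  have h1 : HasDerivAt (fun s : ℝ => s • uvec θ) (uvec θ) r := by
    simpa using (hasDerivAt_id r).smul_const (uvec θ)
  have h2 := (hw.differentiable one_ne_zero (r • uvec θ)).hasFDerivAt
  exact h2.comp_hasDerivAt r h1

lemma cs_integral {α : Type*} [MeasurableSpace α] (μ : Measure α) (f g : α → ℝ)
    (hf : MemLp f 2 μ) (hg : MemLp g 2 μ) (hf0 : 0 ≤ᵐ[μ] f) (hg0 : 0 ≤ᵐ[μ] g) :
    ∫ a, f a * g a ∂μ ≤ Real.sqrt (∫ a, f a ^ 2 ∂μ) * Real.sqrt (∫ a, g a ^ 2 ∂μ) := by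
  have hpq : Real.HolderConjugate 2 2 := Real.HolderConjugate.two_two
  have h2 : ENNReal.ofReal (2:ℝ) = 2 := by
    rw [ENNReal.ofReal_ofNat]
  have key := integral_mul_le_Lp_mul_Lq_of_nonneg hpq hf0 hg0 (h2 ▸ hf) (h2 ▸ hg)
  have hr : ∀ x : ℝ, x ^ (2:ℝ) = x ^ (2:ℕ) := fun x => by
    rw [← Real.rpow_natCast x 2]; norm_num
  simp only [hr] at key
  refine key.trans (le_of_eq ?_)
  rw [Real.sqrt_eq_rpow, Real.sqrt_eq_rpow]


lemma integrableOn_rect {f : ℝ × ℝ → ℝ} (hf : Continuous f) (a b c d : ℝ) :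
    IntegrableOn f (Ioo a b ×ˢ Ioo c d) := by
  have h1 : IntegrableOn f (Icc a b ×ˢ Icc c d) :=
    ContinuousOn.integrableOn_compact (isCompact_Icc.prod isCompact_Icc) hf.continuousOn
  exact h1.mono_set (Set.prod_mono Ioo_subset_Icc_self Ioo_subset_Icc_self)

lemma volume_rect_lt_top (a b c d : ℝ) : volume (Ioo a b ×ˢ Ioo c d) < ⊤ := by
  rw [MeasureTheory.Measure.volume_eq_prod, Measure.prod_prod, Real.volume_Ioo, Real.volume_Ioo]
  exact ENNReal.mul_lt_top ENNReal.ofReal_lt_top ENNReal.ofReal_lt_top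

lemma memLp_two_rect {f : ℝ × ℝ → ℝ} {a b c d : ℝ}
    (hm : AEStronglyMeasurable f (volume.restrict (Ioo a b ×ˢ Ioo c d)))
    (C : ℝ) (hC : ∀ p ∈ Ioo a b ×ˢ Ioo c d, |f p| ≤ C) :
    MemLp f 2 (volume.restrict (Ioo a b ×ˢ Ioo c d)) := by
  haveI : IsFiniteMeasure (volume.restrict (Ioo a b ×ˢ Ioo c d)) := by
    constructor
    rw [Measure.restrict_apply_univ]
    exact volume_rect_lt_top a b c d
  refine MemLp.of_bound hm C ?_
  refine (ae_restrict_iff' ((measurableSet_Ioo).prod measurableSet_Ioo)).2 ?_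
  exact ae_of_all _ fun p hp => by simpa [Real.norm_eq_abs] using hC p hp


def psiEquiv : (ℝ × ℝ) ≃ᵐ E2 :=
  (MeasurableEquiv.finTwoArrow).symm.trans (MeasurableEquiv.toLp 2 (Fin 2 → ℝ))

lemma psiEquiv_apply (p : ℝ × ℝ) :
    psiEquiv p = (WithLp.equiv 2 (Fin 2 → ℝ)).symm ![p.1, p.2] := rfl

lemma psiEquiv_measurePreserving : MeasurePreserving psiEquiv volume volume := by
  have h1 := (volume_preserving_finTwoArrow ℝ).symm
  have h2 := (EuclideanSpace.volume_preserving_symm_measurableEquiv_toLp (Fin 2)).symm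
  exact h2.comp h1

lemma polar_eq {g : E2 → ℝ} (hg : Continuous g) {r₀ : ℝ} (h0 : 0 < r₀) :
    ∫ x in Metric.ball (0:E2) r₀, g x
      = ∫ p in Ioo (0:ℝ) r₀ ×ˢ Ioo (-π) π, p.1 * g (p.1 • uvec p.2) := by
  have hemb : MeasurableEmbedding (psiEquiv : ℝ × ℝ → E2) := psiEquiv.measurableEmbedding
  have step1 : ∫ x in Metric.ball (0:E2) r₀, g x
      = ∫ p in psiEquiv ⁻¹' Metric.ball (0:E2) r₀, g (psiEquiv p) :=
    (psiEquiv_measurePreserving.setIntegral_preimage_emb hemb g _).symm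
  set T : Set (ℝ × ℝ) := psiEquiv ⁻¹' Metric.ball (0:E2) r₀ with hT
  have hTm : MeasurableSet T := psiEquiv.measurable measurableSet_ball
  have step2 : ∫ p in T, g (psiEquiv p) = ∫ p, T.indicator (fun p => g (psiEquiv p)) p :=
    (integral_indicator hTm).symm
  have step3 : ∫ p, T.indicator (fun p => g (psiEquiv p)) p
      = ∫ q in polarCoord.target, q.1 • (T.indicator (fun p => g (psiEquiv p)) (polarCoord.symm q)) :=
    (integral_comp_polarCoord_symm _).symm
  have hU : polarCoord.symm ⁻¹' T ∩ polarCoord.target = Ioo (0:ℝ) r₀ ×ˢ Ioo (-π) π := by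
    ext q
    simp only [Set.mem_inter_iff, Set.mem_preimage, hT, Metric.mem_ball, dist_zero_right,
      polarCoord_target, Set.mem_prod, Set.mem_Ioi, Set.mem_Ioo]
    constructor
    · rintro ⟨h1, h2, h3⟩
      refine ⟨⟨h2, ?_⟩, h3⟩
      have hn : ‖psiEquiv (polarCoord.symm q)‖ = q.1 := by
        rw [polarCoord_symm_apply, psiEquiv_apply]
        simp only []
        rw [← smul_uvec, norm_smul_uvec, abs_of_pos h2]
      rwa [hn] at h1
    · rintro ⟨⟨h2, h4⟩, h3⟩
      refine ⟨?_, h2, h3⟩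
      have hn : ‖psiEquiv (polarCoord.symm q)‖ = q.1 := by
        rw [polarCoord_symm_apply, psiEquiv_apply]
        simp only []
        rw [← smul_uvec, norm_smul_uvec, abs_of_pos h2]
      rwa [hn]
  have step4 : ∫ q in polarCoord.target,
        q.1 • (T.indicator (fun p => g (psiEquiv p)) (polarCoord.symm q))
      = ∫ q in Ioo (0:ℝ) r₀ ×ˢ Ioo (-π) π, q.1 * g (q.1 • uvec q.2) := by
    have hpt : ∀ q : ℝ × ℝ,
        q.1 • (T.indicator (fun p => g (psiEquiv p)) (polarCoord.symm q))
          = (polarCoord.symm ⁻¹' T).indicator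
              (fun q => q.1 * g (psiEquiv (polarCoord.symm q))) q := by
      intro q
      by_cases hq : polarCoord.symm q ∈ T
      · rw [Set.indicator_of_mem hq, Set.indicator_of_mem (by exact hq), smul_eq_mul]
      · rw [Set.indicator_of_notMem hq, Set.indicator_of_notMem (by exact hq), smul_zero]
    simp only [hpt]
    have hcs : Continuous (polarCoord.symm : ℝ × ℝ → ℝ × ℝ) := by
      have he : (polarCoord.symm : ℝ × ℝ → ℝ × ℝ)
          = fun q => (q.1 * Real.cos q.2, q.1 * Real.sin q.2) := funext polarCoord_symm_apply
      rw [he]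
      exact (continuous_fst.mul (Real.continuous_cos.comp continuous_snd)).prodMk
        (continuous_fst.mul (Real.continuous_sin.comp continuous_snd))
    rw [setIntegral_indicator (hcs.measurable hTm)]
    rw [Set.inter_comm, hU]
    refine setIntegral_congr_fun (by measurability) ?_
    intro q hq
    simp only []
    rw [polarCoord_symm_apply, psiEquiv_apply]
    simp only []
    rw [← smul_uvec]
  rw [step1, step2, step3, step4]


lemma intInt_eq {V : Type*} [NormedAddCommGroup V] [NormedSpace ℝ V]
    (f : ℝ → V) {a b : ℝ} (h : a ≤ b) :
    ∫ x in a..b, f x = ∫ x in Ioo a b, f x := by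
  rw [intervalIntegral.integral_of_le h, integral_Ioc_eq_integral_Ioo]

lemma iter_eq_prod {f : ℝ × ℝ → ℝ} (hf : Continuous f) (a b c d : ℝ) :
    ∫ θ in Ioo c d, ∫ r in Ioo a b, f (r, θ) = ∫ p in Ioo a b ×ˢ Ioo c d, f p := by
  have hInt : IntegrableOn f (Ioo a b ×ˢ Ioo c d) (volume.prod volume) := by
    rw [← MeasureTheory.Measure.volume_eq_prod]; exact integrableOn_rect hf a b c d
  have h1 := setIntegral_prod f hInt
  rw [← MeasureTheory.Measure.volume_eq_prod] at h1
  have h2 : ∫ θ in Ioo c d, ∫ r in Ioo a b, f (r, θ)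
      = ∫ r in Ioo a b, ∫ θ in Ioo c d, f (r, θ) := by
    apply integral_integral_swap
    rw [Measure.prod_restrict, ← MeasureTheory.Measure.volume_eq_prod]
    exact integrableOn_rect (hf.comp (continuous_snd.prodMk continuous_fst)) c d a b
  rw [h2, h1]

lemma cs_weighted {h : ℝ × ℝ → ℝ} (hm : Continuous h) (h0 : ∀ p, 0 ≤ h p)
    {a b c d : ℝ} (ha : 0 < a) (hab : a ≤ b) (hcd : c ≤ d) :
    ∫ p in Ioo a b ×ˢ Ioo c d, h p ≤
      Real.sqrt ((d - c) * Real.log (b / a)) *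
        Real.sqrt (∫ p in Ioo a b ×ˢ Ioo c d, p.1 * h p ^ 2) := by
  set S := Ioo a b ×ˢ Ioo c d with hS
  have hSm : MeasurableSet S := measurableSet_Ioo.prod measurableSet_Ioo
  set μS := volume.restrict S with hμS
  set f : ℝ × ℝ → ℝ := fun p => Real.sqrt (1 / p.1) with hf
  set g : ℝ × ℝ → ℝ := fun p => Real.sqrt p.1 * h p with hg
  have hfm : AEStronglyMeasurable f μS :=
    (Real.continuous_sqrt.measurable.comp
      (measurable_const.div measurable_fst)).aestronglyMeasurable
  have hgm : Continuous g := (Real.continuous_sqrt.comp continuous_fst).mul hm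
  have hfL : MemLp f 2 μS := by
    refine memLp_two_rect hfm (Real.sqrt (1 / a)) ?_
    rintro p ⟨⟨h1, _⟩, _⟩
    rw [abs_of_nonneg (Real.sqrt_nonneg _)]
    exact Real.sqrt_le_sqrt (by
      apply one_div_le_one_div_of_le ha h1.le)
  have hgL : MemLp g 2 μS := by
    obtain ⟨M, hM⟩ := (isCompact_Icc.prod isCompact_Icc).exists_bound_of_continuousOn
      (hm.continuousOn (s := Icc a b ×ˢ Icc c d))
    refine memLp_two_rect hgm.aestronglyMeasurable (Real.sqrt b * M) ?_
    rintro p ⟨⟨h1, h2⟩, ⟨h3, h4⟩⟩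
    have hMp : |h p| ≤ M := by
      have := hM p ⟨⟨h1.le, h2.le⟩, ⟨h3.le, h4.le⟩⟩
      rwa [Real.norm_eq_abs] at this
    rw [abs_mul, abs_of_nonneg (Real.sqrt_nonneg _)]
    exact mul_le_mul (Real.sqrt_le_sqrt h2.le) hMp (abs_nonneg _) (Real.sqrt_nonneg _)
  have hcs := cs_integral μS f g hfL hgL
    (ae_of_all _ fun p => Real.sqrt_nonneg _)
    (ae_of_all _ fun p => mul_nonneg (Real.sqrt_nonneg _) (h0 p))
  have e1 : ∫ p, f p * g p ∂μS = ∫ p in S, h p := by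
    refine setIntegral_congr_fun hSm fun p hp => ?_
    obtain ⟨⟨h1, _⟩, _⟩ := hp
    have hp0 : 0 < p.1 := ha.trans h1
    rw [hf, hg]
    simp only []
    rw [← mul_assoc, ← Real.sqrt_mul (by positivity), one_div_mul_cancel hp0.ne',
      Real.sqrt_one, one_mul]
  have e2 : ∫ p, f p ^ 2 ∂μS = (d - c) * Real.log (b / a) := by
    have e2a : ∫ p, f p ^ 2 ∂μS = ∫ p in S, 1 / p.1 := by
      refine setIntegral_congr_fun hSm fun p hp => ?_
      obtain ⟨⟨h1, _⟩, _⟩ := hp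
      have hp0 : 0 < p.1 := ha.trans h1
      exact Real.sq_sqrt (by positivity)
    have hInt : IntegrableOn (fun p : ℝ × ℝ => 1 / p.1) (Ioo a b ×ˢ Ioo c d)
        (volume.prod volume) := by
      rw [← MeasureTheory.Measure.volume_eq_prod]
      haveI : IsFiniteMeasure (volume.restrict (Ioo a b ×ˢ Ioo c d)) := by
        constructor
        rw [Measure.restrict_apply_univ]
        exact volume_rect_lt_top a b c d
      refine MemLp.integrable one_le_two
        (memLp_two_rect ((measurable_const.div measurable_fst).aestronglyMeasurable)
          (1 / a) ?_)
      rintro p ⟨⟨h1, _⟩, _⟩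
      have hp0 : 0 < p.1 := ha.trans h1
      rw [abs_of_nonneg (by positivity)]
      exact one_div_le_one_div_of_le ha h1.le
    rw [e2a, hS, show (volume : Measure (ℝ × ℝ)) = volume.prod volume from
      MeasureTheory.Measure.volume_eq_prod _ _, setIntegral_prod _ hInt]
    have inner : ∀ r : ℝ, (∫ _ in Ioo c d, 1 / r) = (d - c) * (1 / r) := by
      intro r
      rw [setIntegral_const, measureReal_def, Real.volume_Ioo, ENNReal.toReal_ofReal (by linarith), smul_eq_mul]
    have h0ni : (0:ℝ) ∉ Set.uIcc a b := by
      intro hmem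
      rw [Set.uIcc_of_le hab] at hmem
      linarith [hmem.1]
    calc ∫ x in Ioo a b, ∫ y in Ioo c d, 1 / (x, y).1
        = ∫ x in Ioo a b, (d - c) * (1 / x) := by
          refine setIntegral_congr_fun measurableSet_Ioo fun x _ => ?_
          exact inner x
      _ = (d - c) * Real.log (b / a) := by
          rw [← intInt_eq (fun r => (d - c) * (1 / r)) hab,
            intervalIntegral.integral_const_mul, integral_one_div h0ni]
  have e3 : ∫ p, g p ^ 2 ∂μS = ∫ p in S, p.1 * h p ^ 2 := by
    refine setIntegral_congr_fun hSm fun p hp => ?_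
    obtain ⟨⟨h1, _⟩, _⟩ := hp
    rw [hg]
    simp only []
    rw [mul_pow, Real.sq_sqrt (ha.trans h1).le]
  rw [e1, e2, e3] at hcs
  exact hcs


variable {n : ℕ} {w : E2 → EuclideanSpace ℝ (Fin n)}

lemma cont_F (hw : ContDiff ℝ 1 w) : Continuous fun p : ℝ × ℝ => w (p.1 • uvec p.2) :=
  hw.continuous.comp continuous_Phi

lemma cont_D (hw : ContDiff ℝ 1 w) :
    Continuous fun p : ℝ × ℝ => fderiv ℝ w (p.1 • uvec p.2) (uvec p.2) :=
  ((hw.continuous_fderiv one_ne_zero).comp continuous_Phi).clm_apply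
    (continuous_uvec.comp continuous_snd)

lemma ftc_bound (hw : ContDiff ℝ 1 w) {a b r₀ l : ℝ}
    (hab : a ≤ b) (hbr : b ≤ r₀) (hl : 0 < l) (hba : b - a = 1 / l) (θ : ℝ) :
    ‖w (r₀ • uvec θ)‖ ≤ l * (∫ r in a..b, ‖w (r • uvec θ)‖)
      + ∫ s in a..r₀, ‖fderiv ℝ w (s • uvec θ) (uvec θ)‖ := by
  set Q : ℝ := ∫ s in a..r₀, ‖fderiv ℝ w (s • uvec θ) (uvec θ)‖ with hQ
  have hDc : Continuous fun s : ℝ => fderiv ℝ w (s • uvec θ) (uvec θ) :=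
    (cont_D hw).comp (continuous_id.prodMk continuous_const)
  have hFc : Continuous fun r : ℝ => w (r • uvec θ) :=
    (cont_F hw).comp (continuous_id.prodMk continuous_const)
  have har : a ≤ r₀ := hab.trans hbr
  have key1 : ∀ r ∈ Set.uIcc a b,
      w (r₀ • uvec θ) = w (r • uvec θ) + ∫ s in r..r₀, fderiv ℝ w (s • uvec θ) (uvec θ) := by
    intro r _
    have hftc := intervalIntegral.integral_eq_sub_of_hasDerivAt
      (f := fun s => w (s • uvec θ)) (f' := fun s => fderiv ℝ w (s • uvec θ) (uvec θ))
      (fun t _ => hasDerivAt_radial hw θ t) (hDc.intervalIntegrable r r₀)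
    rw [hftc]
    abel
  have key2 : ∀ r ∈ Set.uIcc a b,
      ‖w (r₀ • uvec θ)‖ ≤ ‖w (r • uvec θ)‖ + Q := by
    intro r hr
    rw [Set.uIcc_of_le hab] at hr
    rw [key1 r (by rw [Set.uIcc_of_le hab]; exact hr)]
    refine (norm_add_le _ _).trans (add_le_add_right ?_ _)
    refine (intervalIntegral.norm_integral_le_integral_norm (hr.2.trans hbr)).trans ?_
    refine intervalIntegral.integral_mono_interval hr.1 (hr.2.trans hbr) le_rfl ?_ ?_
    · exact Filter.Eventually.of_forall fun s => norm_nonneg _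
    · exact hDc.norm.intervalIntegrable a r₀
  have hconst : ‖w (r₀ • uvec θ)‖ = l * ∫ r in a..b, ‖w (r₀ • uvec θ)‖ := by
    rw [intervalIntegral.integral_const, hba, smul_eq_mul]
    field_simp
  rw [hconst]
  have hmono : (∫ r in a..b, ‖w (r₀ • uvec θ)‖)
      ≤ ∫ r in a..b, (‖w (r • uvec θ)‖ + Q) := by
    refine intervalIntegral.integral_mono_on hab ?_ ?_ fun r hr => key2 r ?_
    · exact intervalIntegrable_const
    · exact (hFc.norm.add continuous_const).intervalIntegrable a b
    · rw [Set.uIcc_of_le hab]; exact hr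
  have hsplit : (∫ r in a..b, (‖w (r • uvec θ)‖ + Q))
      = (∫ r in a..b, ‖w (r • uvec θ)‖) + (b - a) * Q := by
    rw [intervalIntegral.integral_add (hFc.norm.intervalIntegrable a b)
      intervalIntegrable_const, intervalIntegral.integral_const, smul_eq_mul]
  calc l * ∫ r in a..b, ‖w (r₀ • uvec θ)‖
      ≤ l * ((∫ r in a..b, ‖w (r • uvec θ)‖) + (b - a) * Q) := by
        rw [← hsplit]
        exact mul_le_mul_of_nonneg_left hmono hl.le
    _ = l * (∫ r in a..b, ‖w (r • uvec θ)‖) + Q := by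
        rw [hba]
        field_simp

lemma cont_hs (hw : ContDiff ℝ 1 w) : Continuous (hsNormSq w) := by
  apply continuous_finset_sum
  intro i _
  exact (((hw.continuous_fderiv one_ne_zero).clm_apply continuous_const).norm).pow 2

lemma cont_rho (l : ℝ) : Continuous (rho l) := by
  apply continuous_const.div
  · exact continuous_const.add (continuous_const.mul (continuous_norm.pow 2))
  · intro x
    positivity

lemma hs_nonneg (x : E2) : 0 ≤ hsNormSq w x :=
  Finset.sum_nonneg fun i _ => sq_nonneg _

lemma full_nonneg (l : ℝ) (x : E2) :
    0 ≤ hsNormSq w x + rho l x ^ 2 * ‖w x‖ ^ 2 :=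
  add_nonneg (hs_nonneg x) (mul_nonneg (sq_nonneg _) (sq_nonneg _))

lemma cont_full (hw : ContDiff ℝ 1 w) (l : ℝ) :
    Continuous fun x : E2 => hsNormSq w x + rho l x ^ 2 * ‖w x‖ ^ 2 :=
  (cont_hs hw).add (((cont_rho l).pow 2).mul (hw.continuous.norm.pow 2))

lemma rho_lower {l r : ℝ} (hl : 0 < l) (hr : 0 ≤ r) (hrb : r ≤ 2 / l) (θ : ℝ) :
    l / 5 ≤ rho l (r • uvec θ) := by
  rw [rho, norm_smul_uvec, abs_of_nonneg hr]
  have h1 : l * r ≤ 2 := by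
    rw [le_div_iff₀ hl] at hrb
    nlinarith
  have h2 : 1 + l ^ 2 * r ^ 2 ≤ 5 := by nlinarith [mul_nonneg hl.le hr]
  have h3 : 0 < 1 + l ^ 2 * r ^ 2 := by positivity
  exact div_le_div_of_nonneg_left hl.le h3 h2

lemma sq_to_I (hw : ContDiff ℝ 1 w) {r₀ l a b c : ℝ} (hr₀ : 0 < r₀) (hl : 0 < l)
    (ha : 0 < a) (hbr : b ≤ r₀) (hc : 0 ≤ c) {h : ℝ × ℝ → ℝ} (hhc : Continuous h)
    (hcomp : ∀ p ∈ Ioo a b ×ˢ Ioo (-π) π, h p ^ 2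
      ≤ c * (hsNormSq w (p.1 • uvec p.2)
          + rho l (p.1 • uvec p.2) ^ 2 * ‖w (p.1 • uvec p.2)‖ ^ 2)) :
    ∫ p in Ioo a b ×ˢ Ioo (-π) π, p.1 * h p ^ 2
      ≤ c * ∫ x in Metric.ball (0:E2) r₀, (hsNormSq w x + rho l x ^ 2 * ‖w x‖ ^ 2) := by
  set full : E2 → ℝ := fun x => hsNormSq w x + rho l x ^ 2 * ‖w x‖ ^ 2 with hfull
  have hfullc : Continuous full := cont_full hw l
  have hwc : Continuous fun p : ℝ × ℝ => p.1 * full (p.1 • uvec p.2) :=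
    continuous_fst.mul (hfullc.comp continuous_Phi)
  have hbig : IntegrableOn (fun p : ℝ × ℝ => p.1 * full (p.1 • uvec p.2))
      (Ioo 0 r₀ ×ˢ Ioo (-π) π) := integrableOn_rect hwc 0 r₀ (-π) π
  have step1 : ∫ p in Ioo a b ×ˢ Ioo (-π) π, p.1 * h p ^ 2
      ≤ ∫ p in Ioo a b ×ˢ Ioo (-π) π, c * (p.1 * full (p.1 • uvec p.2)) := by
    refine setIntegral_mono_on ?_ ?_ (measurableSet_Ioo.prod measurableSet_Ioo) ?_
    · exact integrableOn_rect (continuous_fst.mul (hhc.pow 2)) a b (-π) π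
    · exact integrableOn_rect (continuous_const.mul hwc) a b (-π) π
    · intro p hp
      have hp1 : 0 < p.1 := ha.trans hp.1.1
      calc p.1 * h p ^ 2 ≤ p.1 * (c * full (p.1 • uvec p.2)) :=
            mul_le_mul_of_nonneg_left (hcomp p hp) hp1.le
        _ = c * (p.1 * full (p.1 • uvec p.2)) := by ring
  have step2 : ∫ p in Ioo a b ×ˢ Ioo (-π) π, c * (p.1 * full (p.1 • uvec p.2))
      = c * ∫ p in Ioo a b ×ˢ Ioo (-π) π, p.1 * full (p.1 • uvec p.2) :=
    integral_const_mul c _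
  have step3 : ∫ p in Ioo a b ×ˢ Ioo (-π) π, p.1 * full (p.1 • uvec p.2)
      ≤ ∫ p in Ioo 0 r₀ ×ˢ Ioo (-π) π, p.1 * full (p.1 • uvec p.2) := by
    refine setIntegral_mono_set hbig ?_ ?_
    · refine (ae_restrict_iff' (measurableSet_Ioo.prod measurableSet_Ioo)).2
        (ae_of_all _ fun p hp => ?_)
      exact mul_nonneg hp.1.1.le (full_nonneg l _)
    · exact (Set.prod_mono (Ioo_subset_Ioo ha.le hbr) subset_rfl).eventuallyLE
  have step4 : ∫ p in Ioo 0 r₀ ×ˢ Ioo (-π) π, p.1 * full (p.1 • uvec p.2)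
      = ∫ x in Metric.ball (0:E2) r₀, full x := (polar_eq hfullc hr₀).symm
  calc ∫ p in Ioo a b ×ˢ Ioo (-π) π, p.1 * h p ^ 2
      ≤ c * ∫ p in Ioo a b ×ˢ Ioo (-π) π, p.1 * full (p.1 • uvec p.2) := by
        rw [← step2]; exact step1
    _ ≤ c * ∫ x in Metric.ball (0:E2) r₀, full x := by
        rw [← step4]; exact mul_le_mul_of_nonneg_left step3 hc


lemma termA (hw : ContDiff ℝ 1 w) {r₀ l : ℝ} (hr₀ : 0 < r₀) (hl2 : 2 ≤ l)
    (hbr : 2 / l ≤ r₀) :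
    ∫ θ in Ioo (-π) π, ∫ r in Ioo (1/l) (2/l), ‖w (r • uvec θ)‖
      ≤ Real.sqrt (2 * π * Real.log 2) * ((5 / l) *
          Real.sqrt (∫ x in Metric.ball (0:E2) r₀,
            (hsNormSq w x + rho l x ^ 2 * ‖w x‖ ^ 2))) := by
  have hl0 : 0 < l := lt_of_lt_of_le two_pos hl2
  have ha : (0:ℝ) < 1 / l := by positivity
  have hli : (0:ℝ) ≤ l⁻¹ := by positivity
  have hab : (1:ℝ)/l ≤ 2/l := by
    rw [div_eq_mul_inv, div_eq_mul_inv]; nlinarith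
  set I := ∫ x in Metric.ball (0:E2) r₀,
    (hsNormSq w x + rho l x ^ 2 * ‖w x‖ ^ 2) with hI
  have hI0 : 0 ≤ I := setIntegral_nonneg measurableSet_ball fun x _ => full_nonneg l x
  have hconv : ∫ θ in Ioo (-π) π, ∫ r in Ioo (1/l) (2/l), ‖w (r • uvec θ)‖
      = ∫ p in Ioo (1/l) (2/l) ×ˢ Ioo (-π) π, ‖w (p.1 • uvec p.2)‖ :=
    iter_eq_prod ((cont_F hw).norm) (1/l) (2/l) (-π) π
  rw [hconv]
  have hcw := cs_weighted (h := fun p : ℝ × ℝ => ‖w (p.1 • uvec p.2)‖)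
    ((cont_F hw).norm) (fun p => norm_nonneg _) ha hab
    (by linarith [Real.pi_pos] : -π ≤ π)
  refine hcw.trans ?_
  have e1 : (π - -π) * Real.log ((2/l) / (1/l)) = 2 * π * Real.log 2 := by
    have h2 : (2/l) / (1/l) = 2 := by field_simp
    rw [h2]; ring
  have e2 : ∫ p in Ioo (1/l) (2/l) ×ˢ Ioo (-π) π, p.1 * ‖w (p.1 • uvec p.2)‖ ^ 2
      ≤ (25 / l^2) * I := by
    refine sq_to_I hw hr₀ hl0 ha hbr (by positivity) ((cont_F hw).norm) ?_
    rintro p ⟨⟨h1, h2⟩, _⟩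
    have hp0 : 0 < p.1 := ha.trans h1
    have hρ := rho_lower hl0 hp0.le h2.le p.2
    set x := p.1 • uvec p.2 with hx
    have hρ0 : (0:ℝ) ≤ rho l x := le_trans (by positivity) hρ
    have hkey : l^2/25 * ‖w x‖^2 ≤ rho l x ^2 * ‖w x‖^2 := by
      have hsq : l^2/25 ≤ rho l x ^2 := by nlinarith
      exact mul_le_mul_of_nonneg_right hsq (sq_nonneg _)
    have hhs := hs_nonneg (w := w) x
    have h5 : 25/l^2 * (l^2/25 * ‖w x‖^2) ≤ 25/l^2 * (rho l x^2 * ‖w x‖^2) :=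
      mul_le_mul_of_nonneg_left hkey (by positivity)
    have h6 : 25/l^2 * (l^2/25 * ‖w x‖^2) = ‖w x‖^2 := by field_simp
    calc ‖w x‖^2 = 25/l^2 * (l^2/25 * ‖w x‖^2) := h6.symm
      _ ≤ 25/l^2 * (rho l x^2 * ‖w x‖^2) := h5
      _ ≤ 25/l^2 * (hsNormSq w x + rho l x^2 * ‖w x‖^2) :=
          mul_le_mul_of_nonneg_left (le_add_of_nonneg_left hhs) (by positivity)
  rw [e1]
  refine mul_le_mul_of_nonneg_left ?_ (Real.sqrt_nonneg _)
  refine (Real.sqrt_le_sqrt e2).trans (le_of_eq ?_)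
  rw [Real.sqrt_mul (by positivity), show (25:ℝ)/l^2 = (5/l)^2 by ring,
    Real.sqrt_sq (by positivity)]

lemma termB (hw : ContDiff ℝ 1 w) {r₀ l : ℝ} (hr₀ : 0 < r₀) (hl2 : 2 ≤ l)
    (hbr : 2 / l ≤ r₀) :
    ∫ θ in Ioo (-π) π, ∫ s in Ioo (1/l) r₀, ‖fderiv ℝ w (s • uvec θ) (uvec θ)‖
      ≤ Real.sqrt (2 * π * Real.log (r₀ * l)) *
          Real.sqrt (∫ x in Metric.ball (0:E2) r₀,
            (hsNormSq w x + rho l x ^ 2 * ‖w x‖ ^ 2)) := by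
  have hl0 : 0 < l := lt_of_lt_of_le two_pos hl2
  have ha : (0:ℝ) < 1 / l := by positivity
  have hli : (0:ℝ) ≤ l⁻¹ := by positivity
  have hab : (1:ℝ)/l ≤ 2/l := by
    rw [div_eq_mul_inv, div_eq_mul_inv]; nlinarith
  have har : (1:ℝ)/l ≤ r₀ := hab.trans hbr
  set I := ∫ x in Metric.ball (0:E2) r₀,
    (hsNormSq w x + rho l x ^ 2 * ‖w x‖ ^ 2) with hI
  have hI0 : 0 ≤ I := setIntegral_nonneg measurableSet_ball fun x _ => full_nonneg l x
  have hconv : ∫ θ in Ioo (-π) π, ∫ s in Ioo (1/l) r₀, ‖fderiv ℝ w (s • uvec θ) (uvec θ)‖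
      = ∫ p in Ioo (1/l) r₀ ×ˢ Ioo (-π) π, ‖fderiv ℝ w (p.1 • uvec p.2) (uvec p.2)‖ :=
    iter_eq_prod ((cont_D hw).norm) (1/l) r₀ (-π) π
  rw [hconv]
  have hcw := cs_weighted (h := fun p : ℝ × ℝ => ‖fderiv ℝ w (p.1 • uvec p.2) (uvec p.2)‖)
    ((cont_D hw).norm) (fun p => norm_nonneg _) ha har
    (by linarith [Real.pi_pos] : -π ≤ π)
  refine hcw.trans ?_
  have e1 : (π - -π) * Real.log (r₀ / (1/l)) = 2 * π * Real.log (r₀ * l) := by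
    have h2 : r₀ / (1/l) = r₀ * l := by field_simp
    rw [h2]; ring
  have e2 : ∫ p in Ioo (1/l) r₀ ×ˢ Ioo (-π) π,
        p.1 * ‖fderiv ℝ w (p.1 • uvec p.2) (uvec p.2)‖ ^ 2
      ≤ 1 * I := by
    refine sq_to_I hw hr₀ hl0 ha le_rfl zero_le_one ((cont_D hw).norm) ?_
    rintro p ⟨⟨h1, h2⟩, _⟩
    rw [one_mul]
    refine le_trans (hs_bound (fderiv ℝ w (p.1 • uvec p.2)) p.2) ?_
    exact le_add_of_nonneg_right (mul_nonneg (sq_nonneg _) (sq_nonneg _))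
  rw [e1]
  refine mul_le_mul_of_nonneg_left ?_ (Real.sqrt_nonneg _)
  refine (Real.sqrt_le_sqrt e2).trans (le_of_eq ?_)
  rw [one_mul]


set_option maxHeartbeats 2000000 in
lemma circAvg_bound (hw : ContDiff ℝ 1 w) {r₀ l : ℝ} (hr₀ : 0 < r₀) (hl2 : 2 ≤ l)
    (hbr : 2 / l ≤ r₀) :
    ‖circAvg w r₀‖ ≤ (2 * π)⁻¹ *
      (l * ∫ θ in Ioo (-π) π, ∫ r in Ioo (1/l) (2/l), ‖w (r • uvec θ)‖)
      + (2 * π)⁻¹ *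
        ∫ θ in Ioo (-π) π, ∫ s in Ioo (1/l) r₀, ‖fderiv ℝ w (s • uvec θ) (uvec θ)‖ := by
  have hl0 : 0 < l := lt_of_lt_of_le two_pos hl2
  have ha : (0:ℝ) < 1 / l := by positivity
  have hli : (0:ℝ) ≤ l⁻¹ := by positivity
  have hab : (1:ℝ)/l ≤ 2/l := by
    rw [div_eq_mul_inv, div_eq_mul_inv]; nlinarith
  have hba : (2:ℝ)/l - 1/l = 1/l := by ring
  have hππ : -π ≤ π := by linarith [Real.pi_pos]
  set P : ℝ → ℝ := fun θ => ∫ r in (1/l)..(2/l), ‖w (r • uvec θ)‖ with hP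
  set Q : ℝ → ℝ := fun θ => ∫ s in (1/l)..r₀, ‖fderiv ℝ w (s • uvec θ) (uvec θ)‖ with hQdef
  have hPc : Continuous P := by
    have hcont : Continuous (Function.uncurry fun θ r : ℝ => ‖w (r • uvec θ)‖) :=
      (hw.continuous.comp (continuous_snd.smul (continuous_uvec.comp continuous_fst))).norm
    exact intervalIntegral.continuous_parametric_intervalIntegral_of_continuous'
      hcont (1/l) (2/l)
  have hQc : Continuous Q := by
    have hcont : Continuous (Function.uncurry fun θ s : ℝ => ‖fderiv ℝ w (s • uvec θ) (uvec θ)‖) :=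
      (((hw.continuous_fderiv one_ne_zero).comp
          (continuous_snd.smul (continuous_uvec.comp continuous_fst))).clm_apply
        (continuous_uvec.comp continuous_fst)).norm
    exact intervalIntegral.continuous_parametric_intervalIntegral_of_continuous'
      hcont (1/l) r₀
  have hP0 : ∀ θ, 0 ≤ P θ :=
    fun θ => intervalIntegral.integral_nonneg hab fun r _ => norm_nonneg _
  have hQ0 : ∀ θ, 0 ≤ Q θ :=
    fun θ => intervalIntegral.integral_nonneg (hab.trans hbr) fun s _ => norm_nonneg _
  -- rewrite circAvg
  have hCA : circAvg w r₀ = (2 * π)⁻¹ • ∫ θ in (-π)..π, w (r₀ • uvec θ) := by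
    rw [circAvg]
    congr 1
    have hfun : (fun θ => w ((WithLp.equiv 2 (Fin 2 → ℝ)).symm
        ![r₀ * Real.cos θ, r₀ * Real.sin θ])) = fun θ => w (r₀ • uvec θ) :=
      funext fun θ => by rw [smul_uvec]
    rw [hfun]
    have hper : Function.Periodic (fun θ => w (r₀ • uvec θ)) (2 * π) := fun θ => by
      simp only []
      rw [uvec_periodic θ]
    have hshift := hper.intervalIntegral_add_eq 0 (-π)
    rw [zero_add, show -π + 2 * π = π by ring] at hshift
    exact hshift
  have hbound : ‖∫ θ in (-π)..π, w (r₀ • uvec θ)‖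
      ≤ |∫ θ in (-π)..π, (l * P θ + Q θ)| := by
    refine intervalIntegral.norm_integral_le_abs_of_norm_le ?_ ?_
    · refine Filter.Eventually.of_forall fun θ => ?_
      exact ftc_bound hw hab hbr hl0 hba θ
    · exact ((continuous_const.mul hPc).add hQc).intervalIntegrable _ _
  have habs : |∫ θ in (-π)..π, (l * P θ + Q θ)| = ∫ θ in (-π)..π, (l * P θ + Q θ) := by
    refine abs_of_nonneg (intervalIntegral.integral_nonneg hππ fun θ _ => ?_)
    exact add_nonneg (mul_nonneg hl0.le (hP0 θ)) (hQ0 θ)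
  have hsplit : ∫ θ in (-π)..π, (l * P θ + Q θ)
      = l * (∫ θ in (-π)..π, P θ) + ∫ θ in (-π)..π, Q θ := by
    rw [intervalIntegral.integral_add (f := fun θ => l * P θ) ((continuous_const.mul hPc).intervalIntegrable _ _)
      (hQc.intervalIntegrable _ _), intervalIntegral.integral_const_mul]
  have hPconv : ∫ θ in (-π)..π, P θ
      = ∫ θ in Ioo (-π) π, ∫ r in Ioo (1/l) (2/l), ‖w (r • uvec θ)‖ := by
    rw [intInt_eq _ hππ]
    exact setIntegral_congr_fun measurableSet_Ioo fun θ _ => intInt_eq _ hab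
  have hQconv : ∫ θ in (-π)..π, Q θ
      = ∫ θ in Ioo (-π) π, ∫ s in Ioo (1/l) r₀, ‖fderiv ℝ w (s • uvec θ) (uvec θ)‖ := by
    rw [intInt_eq _ hππ]
    exact setIntegral_congr_fun measurableSet_Ioo fun θ _ => intInt_eq _ (hab.trans hbr)
  calc ‖circAvg w r₀‖ = (2 * π)⁻¹ * ‖∫ θ in (-π)..π, w (r₀ • uvec θ)‖ := by
        rw [hCA, norm_smul, Real.norm_eq_abs, abs_of_pos (by positivity)]
    _ ≤ (2 * π)⁻¹ * (l * (∫ θ in (-π)..π, P θ) + ∫ θ in (-π)..π, Q θ) := by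
        refine mul_le_mul_of_nonneg_left ?_ (by positivity)
        rw [← hsplit, ← habs]
        exact hbound
    _ = _ := by rw [hPconv, hQconv]; ring

end Stmt10Aux

open Stmt10Aux

/-- For every `r₀ > 0` and `n ∈ ℕ` there is `C > 0` so that for every `λ ≥ max(2, 2/r₀)` and
every `C¹` map `w : ℝ² → ℝⁿ`:
`|(2π)⁻¹∫₀^{2π} w(r₀cos θ, r₀sin θ)dθ| ≤ C (log λ)^{1/2} (∫_{𝔻_{r₀}} |Dw|² + ρ_λ²|w|² dx)^{1/2}`. -/
theorem stmt10 :
    ∀ r₀ : ℝ, 0 < r₀ → ∀ n : ℕ, ∃ C : ℝ, 0 < C ∧ ∀ l : ℝ, max 2 (2 / r₀) ≤ l →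
      ∀ w : E2 → EuclideanSpace ℝ (Fin n), ContDiff ℝ 1 w →
        ‖circAvg w r₀‖ ≤
          C * Real.sqrt (Real.log l) *
            Real.sqrt (∫ x in Metric.ball (0 : E2) r₀,
              (hsNormSq w x + rho l x ^ 2 * ‖w x‖ ^ 2)) := by
  intro r₀ hr₀ n
  have hlog2 : (0:ℝ) < Real.log 2 := Real.log_pos one_lt_two
  set K : ℝ := 1 + |Real.log r₀| / Real.log 2 with hK
  have hK1 : (1:ℝ) ≤ K := le_add_of_nonneg_right (by positivity)
  have hK0 : (0:ℝ) < K := lt_of_lt_of_le one_pos hK1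
  have hπ : (0:ℝ) < π := Real.pi_pos
  refine ⟨(5 + Real.sqrt K) / Real.sqrt (2 * π) + 1, by positivity, ?_⟩
  intro l hl w hw
  have hl2 : 2 ≤ l := le_trans (le_max_left _ _) hl
  have hl0 : 0 < l := lt_of_lt_of_le two_pos hl2
  have hlr : 2 / r₀ ≤ l := le_trans (le_max_right _ _) hl
  have hbr : 2 / l ≤ r₀ := by
    have h2 : 2 ≤ l * r₀ := (div_le_iff₀ hr₀).1 hlr
    rw [div_le_iff₀ hl0]
    nlinarith
  set I := ∫ x in Metric.ball (0:E2) r₀,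
    (hsNormSq w x + rho l x ^ 2 * ‖w x‖ ^ 2) with hI
  have hI0 : 0 ≤ I := setIntegral_nonneg measurableSet_ball fun x _ => full_nonneg l x
  have hsI : 0 ≤ Real.sqrt I := Real.sqrt_nonneg _
  have hloglpos : 0 < Real.log l := Real.log_pos (lt_of_lt_of_le one_lt_two hl2)
  have hsll : 0 ≤ Real.sqrt (Real.log l) := Real.sqrt_nonneg _
  have hA := termA hw hr₀ hl2 hbr
  have hB := termB hw hr₀ hl2 hbr
  have hmain := circAvg_bound hw hr₀ hl2 hbr
  set s2 : ℝ := Real.sqrt (2 * π) with hs2def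
  have hs2pos : 0 < s2 := Real.sqrt_pos.2 (by positivity)
  have h2π : s2 * s2 = 2 * π := Real.mul_self_sqrt (by positivity)
  -- sqrt comparisons
  have hsq2 : Real.sqrt (2 * π * Real.log 2) ≤ s2 * Real.sqrt (Real.log l) := by
    rw [Real.sqrt_mul (by positivity)]
    exact mul_le_mul_of_nonneg_left
      (Real.sqrt_le_sqrt (Real.log_le_log two_pos hl2)) (Real.sqrt_nonneg _)
  have hsq3 : Real.sqrt (2 * π * Real.log (r₀ * l))
      ≤ s2 * (Real.sqrt K * Real.sqrt (Real.log l)) := by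
    have hlogm : Real.log (r₀ * l) = Real.log r₀ + Real.log l :=
      Real.log_mul hr₀.ne' hl0.ne'
    have h1 : Real.log r₀ ≤ |Real.log r₀| := le_abs_self _
    have h2 : |Real.log r₀| ≤ |Real.log r₀| / Real.log 2 * Real.log l := by
      rw [div_mul_eq_mul_div, le_div_iff₀ hlog2]
      exact mul_le_mul_of_nonneg_left (Real.log_le_log two_pos hl2) (abs_nonneg _)
    have h3 : Real.log (r₀ * l) ≤ K * Real.log l := by
      rw [hlogm, hK]
      have : (1 + |Real.log r₀| / Real.log 2) * Real.log l
          = Real.log l + |Real.log r₀| / Real.log 2 * Real.log l := by ring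
      rw [this]
      linarith
    refine (Real.sqrt_le_sqrt (mul_le_mul_of_nonneg_left h3 (by positivity))).trans
      (le_of_eq ?_)
    rw [Real.sqrt_mul (by positivity), Real.sqrt_mul hK0.le]
  refine hmain.trans ?_
  have eA : l * (Real.sqrt (2 * π * Real.log 2) * (5 / l * Real.sqrt I))
      = 5 * Real.sqrt (2 * π * Real.log 2) * Real.sqrt I := by
    field_simp
  calc (2 * π)⁻¹ * (l * ∫ θ in Set.Ioo (-π) π, ∫ r in Set.Ioo (1/l) (2/l), ‖w (r • uvec θ)‖)
        + (2 * π)⁻¹ *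
          ∫ θ in Set.Ioo (-π) π, ∫ s in Set.Ioo (1/l) r₀, ‖fderiv ℝ w (s • uvec θ) (uvec θ)‖
      ≤ (2 * π)⁻¹ * (l * (Real.sqrt (2 * π * Real.log 2) * (5 / l * Real.sqrt I)))
        + (2 * π)⁻¹ * (Real.sqrt (2 * π * Real.log (r₀ * l)) * Real.sqrt I) := by
        refine add_le_add ?_ ?_
        · exact mul_le_mul_of_nonneg_left (mul_le_mul_of_nonneg_left hA hl0.le)
            (by positivity)
        · exact mul_le_mul_of_nonneg_left hB (by positivity)
    _ ≤ (2 * π)⁻¹ * (5 * (s2 * Real.sqrt (Real.log l)) * Real.sqrt I)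
        + (2 * π)⁻¹ * ((s2 * (Real.sqrt K * Real.sqrt (Real.log l))) * Real.sqrt I) := by
        refine add_le_add ?_ ?_
        · rw [eA]
          refine mul_le_mul_of_nonneg_left ?_ (by positivity)
          refine mul_le_mul_of_nonneg_right ?_ hsI
          exact mul_le_mul_of_nonneg_left hsq2 (by norm_num)
        · refine mul_le_mul_of_nonneg_left ?_ (by positivity)
          exact mul_le_mul_of_nonneg_right hsq3 hsI
    _ = (5 + Real.sqrt K) / s2 * Real.sqrt (Real.log l) * Real.sqrt I := by
        rw [← h2π]
        field_simp
    _ ≤ ((5 + Real.sqrt K) / s2 + 1) * Real.sqrt (Real.log l) * Real.sqrt I := by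
        have h0 : 0 ≤ Real.sqrt (Real.log l) * Real.sqrt I := by positivity
        nlinarith
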